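/- For n ≥ 2, the space of (n−1)-forms obtained by contracting ψ₊ with vectors equals ⟦λ^{n−1,0}⟧: {x ⌟ ψ₊ : x ∈ V} = ⟦λ^{n−1,0}⟧, and likewise {x ⌟ ψ₋ : x ∈ V} = ⟦λ^{n−1,0}⟧. -/

import Mathlib

noncomputable section

open scoped RealInnerProductSpace
open Function

namespace SUnPaper

variable {V : Type*} [NormedAddCommGroup V] [InnerProductSpace ℝ V]

/-- Wedge product of real-valued alternating forms. -/
def wedge {p q : ℕ} (a : V [⋀^Fin p]→ₗ[ℝ] ℝ) (b : V [⋀^Fin q]→ₗ[ℝ] ℝ) :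
    V [⋀^Fin (p + q)]→ₗ[ℝ] ℝ :=
  (((TensorProduct.lid ℝ ℝ).toLinearMap).compAlternatingMap (a.domCoprod b)).domDomCongr
    finSumFinEquiv

/-- Wedge product of complex-valued (ℝ-multilinear) alternating forms. -/
def cwedge {p q : ℕ} (a : V [⋀^Fin p]→ₗ[ℝ] ℂ) (b : V [⋀^Fin q]→ₗ[ℝ] ℂ) :
    V [⋀^Fin (p + q)]→ₗ[ℝ] ℂ :=
  ((LinearMap.mul' ℝ ℂ).compAlternatingMap (a.domCoprod b)).domDomCongr finSumFinEquiv

/-- The one-form `⟪·, x⟫` associated to a vector `x` via the metric. -/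
def oneForm (x : V) : V [⋀^Fin 1]→ₗ[ℝ] ℝ :=
  AlternatingMap.ofSubsingleton ℝ V ℝ 0 ((innerₗ V).flip x)

/-- A complex-valued one-form from an `ℝ`-linear map into `ℂ`. -/
def cOneForm (f : V →ₗ[ℝ] ℂ) : V [⋀^Fin 1]→ₗ[ℝ] ℂ :=
  AlternatingMap.ofSubsingleton ℝ V ℂ 0 f

/-- The complex one-form `x + i·y`, i.e. `w ↦ ⟪w, x⟫ + i ⟪w, y⟫`. -/
def cplxPair (x y : V) : V →ₗ[ℝ] ℂ :=
  Complex.ofRealAm.toLinearMap ∘ₗ ((innerₗ V).flip x)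
    + Complex.I • (Complex.ofRealAm.toLinearMap ∘ₗ ((innerₗ V).flip y))

/-- Iterated wedge of complex one-forms. -/
def cprod : ∀ (k : ℕ), (Fin k → (V [⋀^Fin 1]→ₗ[ℝ] ℂ)) → V [⋀^Fin k]→ₗ[ℝ] ℂ
  | 0, _ => AlternatingMap.constOfIsEmpty ℝ V (Fin 0) 1
  | (k + 1), f => cwedge (cprod k (f ∘ Fin.castSucc)) (f (Fin.last k))

/-- The complex volume form `Ψ = e₁ℂ ∧ ⋯ ∧ eₙℂ` of the SU(n)-structure determined by
`I` and the adapted basis `e₁, …, eₙ, Ie₁, …, Ieₙ`. -/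
def Psi (n : ℕ) (J : V →ₗ[ℝ] V) (e : Fin n → V) : V [⋀^Fin n]→ₗ[ℝ] ℂ :=
  cprod n fun j => cOneForm (cplxPair (e j) (J (e j)))

/-- `ψ₊ = Re (e₁ℂ ∧ ⋯ ∧ eₙℂ)`. -/
def psiP (n : ℕ) (J : V →ₗ[ℝ] V) (e : Fin n → V) : V [⋀^Fin n]→ₗ[ℝ] ℝ :=
  Complex.reLm.compAlternatingMap (Psi n J e)

/-- `ψ₋ = Im (e₁ℂ ∧ ⋯ ∧ eₙℂ)`. -/
def psiM (n : ℕ) (J : V →ₗ[ℝ] V) (e : Fin n → V) : V [⋀^Fin n]→ₗ[ℝ] ℝ :=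
  Complex.imLm.compAlternatingMap (Psi n J e)

/-- Interior product `x ⌟ b` of a `p`-form by a vector. -/
def ic : ∀ {p : ℕ}, V → (V [⋀^Fin p]→ₗ[ℝ] ℝ) → V [⋀^Fin (p - 1)]→ₗ[ℝ] ℝ
  | 0, _, _ => 0
  | (_ + 1), x, a => a.curryLeft x

/-- `k`-th power `ω^k = ω ∧ ⋯ ∧ ω`. -/
def wpow (ω : V [⋀^Fin 2]→ₗ[ℝ] ℝ) : ∀ k : ℕ, V [⋀^Fin (2 * k)]→ₗ[ℝ] ℝ
  | 0 => AlternatingMap.constOfIsEmpty ℝ V (Fin 0) 1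
  | (k + 1) => wedge (wpow ω k) ω

/-- Inner product of `p`-forms: `⟨a,c⟩ = (1/p!) Σ a(f_{i₁},…) c(f_{i₁},…)`. -/
def formInner {ι : Type*} [Fintype ι] (B : ι → V) {p : ℕ}
    (a c : V [⋀^Fin p]→ₗ[ℝ] ℝ) : ℝ :=
  (p.factorial : ℝ)⁻¹ * ∑ f : Fin p → ι, a (fun i => B (f i)) * c (fun i => B (f i))

/-- The space `⟦λ^{p,0}⟧`: real `p`-forms with `I₍ᵢ₎I₍ⱼ₎ b = -b` for all `i < j`. -/
def IsLam (J : V →ₗ[ℝ] V) {p : ℕ} (a : V [⋀^Fin p]→ₗ[ℝ] ℝ) : Prop :=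
  ∀ (v : Fin p → V) (i j : Fin p), i < j →
    a (Function.update (Function.update v i (J (v i))) j (J (v j))) = - a v


section Aux
open Equiv


private lemma cwedge_one_key {k : ℕ} (a : V [⋀^Fin k]→ₗ[ℝ] ℂ) (b : V [⋀^Fin 1]→ₗ[ℝ] ℂ)
    (v : Fin (k + 1) → V) :
    (k.factorial : ℂ) * cwedge a b v
      = ∑ σ : Perm (Fin k ⊕ Fin 1), ((Perm.sign σ : ℤ) : ℂ) *
          (a (fun i => v (finSumFinEquiv (σ (Sum.inl i)))) *
           b (fun i => v (finSumFinEquiv (σ (Sum.inr i))))) := by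
  classical
  set w : Fin k ⊕ Fin 1 → V := fun i => v (finSumFinEquiv i) with hw
  have cw : cwedge a b v = LinearMap.mul' ℝ ℂ (a.domCoprod b w) := rfl
  have h0 : MultilinearMap.alternatization
      (MultilinearMap.domCoprod (a : MultilinearMap ℝ (fun _ : Fin k => V) ℂ)
        (b : MultilinearMap ℝ (fun _ : Fin 1 => V) ℂ)) w
      = (((Fintype.card (Fin k)).factorial * (Fintype.card (Fin 1)).factorial) •
          a.domCoprod b) w := by
    rw [MultilinearMap.domCoprod_alternization_eq]
  rw [MultilinearMap.alternatization_apply] at h0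
  have h1 := congrArg (LinearMap.mul' ℝ ℂ) h0
  rw [map_sum] at h1
  simp only [Fintype.card_fin, Nat.factorial_one, mul_one, AlternatingMap.smul_apply] at h1
  rw [map_nsmul] at h1
  rw [← cw] at h1
  rw [nsmul_eq_mul] at h1
  rw [← h1]
  apply Finset.sum_congr rfl
  intro σ _
  rw [Units.smul_def, map_zsmul]
  rw [MultilinearMap.domDomCongr_apply, MultilinearMap.domCoprod_apply, LinearMap.mul'_apply]
  rw [zsmul_eq_mul]
  push_cast
  rfl

private lemma cwedge_one_apply {k : ℕ} (a : V [⋀^Fin k]→ₗ[ℝ] ℂ) (b : V [⋀^Fin 1]→ₗ[ℝ] ℂ)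
    (v : Fin (k + 1) → V) :
    cwedge a b v = ∑ p : Fin (k + 1),
      (-1 : ℂ) ^ (k + (p : ℕ)) * (b (fun _ => v p) * a (v ∘ p.succAbove)) := by
  classical
  have hfac : (k.factorial : ℂ) ≠ 0 := by exact_mod_cast k.factorial_ne_zero
  apply mul_left_cancel₀ hfac
  rw [cwedge_one_key]
  have S1 : (∑ σ : Perm (Fin k ⊕ Fin 1), ((Perm.sign σ : ℤ) : ℂ) *
          (a (fun i => v (finSumFinEquiv (σ (Sum.inl i)))) *
           b (fun i => v (finSumFinEquiv (σ (Sum.inr i))))))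
      = ∑ μ : Perm (Fin (k + 1)), ((Perm.sign μ : ℤ) : ℂ) *
          (a (fun i => v (μ (Fin.castSucc i))) * b (fun _ => v (μ (Fin.last k)))) := by
    refine Fintype.sum_equiv finSumFinEquiv.permCongr _ _ (fun σ => ?_)
    rw [Equiv.Perm.sign_permCongr]
    have ea : (fun i => v (finSumFinEquiv (σ (Sum.inl i))))
        = fun i => v ((finSumFinEquiv.permCongr σ) (Fin.castSucc i)) := by
      funext i
      simp only [Equiv.permCongr_apply]
      congr 2
      rw [show Fin.castSucc i = finSumFinEquiv (Sum.inl i) from rfl, Equiv.symm_apply_apply]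
    have eb : (fun i => v (finSumFinEquiv (σ (Sum.inr i))))
        = fun _ : Fin 1 => v ((finSumFinEquiv.permCongr σ) (Fin.last k)) := by
      funext i
      rw [Subsingleton.elim i 0]
      simp only [Equiv.permCongr_apply]
      congr 2
      rw [show Fin.last k = finSumFinEquiv (Sum.inr 0) from by
        rw [finSumFinEquiv_apply_right]; ext; simp, Equiv.symm_apply_apply]
    rw [ea, eb]
  rw [S1]
  set r : Perm (Fin (k + 1)) := Fin.cycleRange (Fin.last k) with hr
  have hsignr : ((Perm.sign r : ℤ) : ℂ) = (-1) ^ k := by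
    rw [hr, Fin.sign_cycleRange]
    push_cast
    simp
  have hr1 : ∀ i : Fin k, r (Fin.castSucc i) = i.succ := by
    intro i
    rw [hr, Fin.cycleRange_of_lt (Fin.castSucc_lt_last i), Fin.coeSucc_eq_succ]
  have hr2 : r (Fin.last k) = 0 := by rw [hr, Fin.cycleRange_self]
  have S2 : (∑ μ : Perm (Fin (k + 1)), ((Perm.sign μ : ℤ) : ℂ) *
          (a (fun i => v (μ (Fin.castSucc i))) * b (fun _ => v (μ (Fin.last k)))))
      = ∑ ν : Perm (Fin (k + 1)), ((Perm.sign ν : ℤ) : ℂ) * (-1 : ℂ) ^ k *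
          (a (fun i => v (ν i.succ)) * b (fun _ => v (ν 0))) := by
    refine (Fintype.sum_equiv (Equiv.mulRight r) _ _ (fun ν => ?_)).symm
    have e1 : (fun i => v (((Equiv.mulRight r) ν) (Fin.castSucc i))) = fun i => v (ν i.succ) := by
      funext i
      rw [Equiv.coe_mulRight, Equiv.Perm.mul_apply, hr1]
    have e2 : (fun _ : Fin 1 => v (((Equiv.mulRight r) ν) (Fin.last k)))
        = fun _ : Fin 1 => v (ν 0) := by
      funext i
      rw [Equiv.coe_mulRight, Equiv.Perm.mul_apply, hr2]
    rw [e1, e2, Equiv.coe_mulRight, Equiv.Perm.sign_mul]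
    push_cast
    rw [hsignr]
  rw [S2]
  have S3 : (∑ ν : Perm (Fin (k + 1)), ((Perm.sign ν : ℤ) : ℂ) * (-1 : ℂ) ^ k *
          (a (fun i => v (ν i.succ)) * b (fun _ => v (ν 0))))
      = ∑ pe : Fin (k + 1) × Perm (Fin k),
          ((Perm.sign (Equiv.Perm.decomposeFin.symm pe) : ℤ) : ℂ) * (-1 : ℂ) ^ k *
          (a (fun i => v (Equiv.swap 0 pe.1 ((pe.2 i).succ))) * b (fun _ => v pe.1)) := by
    refine (Fintype.sum_equiv Equiv.Perm.decomposeFin.symm _ _ (fun pe => ?_)).symm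
    obtain ⟨p, e⟩ := pe
    simp only [Equiv.Perm.decomposeFin_symm_apply_zero, Equiv.Perm.decomposeFin_symm_apply_succ]
  rw [S3, Fintype.sum_prod_type, Finset.mul_sum]
  refine Finset.sum_congr rfl (fun p _ => ?_)
  -- inner sum over e : Perm (Fin k)
  have inner : ∀ e : Perm (Fin k),
      ((Perm.sign (Equiv.Perm.decomposeFin.symm (p, e)) : ℤ) : ℂ) * (-1 : ℂ) ^ k *
        (a (fun i => v (Equiv.swap 0 p ((e i).succ))) * b (fun _ => v p))
      = (if p = 0 then (1:ℂ) else -1) * (-1 : ℂ) ^ k *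
        (a (fun i => v (Equiv.swap 0 p i.succ)) * b (fun _ => v p)) := by
    intro e
    rw [Equiv.Perm.decomposeFin.symm_sign]
    have ha : (fun i => v (Equiv.swap 0 p ((e i).succ)))
        = (fun i => v (Equiv.swap 0 p i.succ)) ∘ e := rfl
    rw [ha, a.map_perm]
    rw [Units.smul_def, zsmul_eq_mul]
    push_cast
    rcases Int.units_eq_one_or (Perm.sign e) with h | h <;>
      rcases eq_or_ne p 0 with hp | hp <;> simp [h, hp] <;> ring
  rw [Finset.sum_congr rfl (fun e _ => inner e)]
  rw [Finset.sum_const, Finset.card_univ, Fintype.card_perm, Fintype.card_fin, nsmul_eq_mul]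
  congr 1
  -- now identify the p-term
  induction p using Fin.cases with
  | zero =>
      simp only [if_pos rfl, Equiv.swap_self, Fin.val_zero, Nat.add_zero]
      have : (fun i : Fin k => v ((Equiv.refl _) i.succ)) = v ∘ (0 : Fin (k+1)).succAbove := by
        funext i; simp [Fin.succAbove_zero]
      rw [this]
      simp only [if_true, one_mul]
      ring
  | succ q =>
      rw [if_neg (Fin.succ_ne_zero q)]
      have ha : (fun i : Fin k => v (Equiv.swap 0 q.succ i.succ))
          = (v ∘ q.succ.succAbove) ∘ q.cycleRange := by
        funext i
        simp [Fin.succAbove_cycleRange]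
      rw [ha, a.map_perm, Fin.sign_cycleRange, Units.smul_def, zsmul_eq_mul]
      push_cast
      rw [Fin.val_succ]
      ring





lemma cOneForm_apply (f : V →ₗ[ℝ] ℂ) (u : Fin 1 → V) : cOneForm f u = f (u 0) := rfl

lemma cplxPair_apply (x y w : V) :
    cplxPair x y w = (⟪w, x⟫ : ℂ) + Complex.I * (⟪w, y⟫ : ℂ) := by
  simp [cplxPair, Complex.ofRealAm, Complex.real_smul, Algebra.ofId_apply, real_inner_comm]

lemma cprod_apply_det {k : ℕ} (f : Fin k → (V [⋀^Fin 1]→ₗ[ℝ] ℂ)) (v : Fin k → V) :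
    cprod k f v = (Matrix.of fun i j => f i (fun _ => v j)).det := by
  induction k with
  | zero => simp [cprod, Matrix.det_fin_zero]
  | succ k ih =>
      show cwedge (cprod k (f ∘ Fin.castSucc)) (f (Fin.last k)) v = _
      rw [cwedge_one_apply, Matrix.det_succ_row _ (Fin.last k)]
      refine Finset.sum_congr rfl (fun p _ => ?_)
      rw [ih]
      have hsub : ((Matrix.of fun i j => f i fun _ => v j).submatrix
            (Fin.last k).succAbove p.succAbove)
          = Matrix.of fun i j => (f ∘ Fin.castSucc) i (fun _ => (v ∘ p.succAbove) j) := by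
        ext i j
        simp [Matrix.submatrix_apply, Fin.succAbove_last]
      rw [hsub]
      simp only [Fin.val_last, Matrix.of_apply]
      ring

section
variable (J : V →ₗ[ℝ] V) (hJ : ∀ v : V, J (J v) = -v)
  (hJorth : ∀ v w : V, ⟪J v, J w⟫ = ⟪v, w⟫)

include hJ hJorth in
lemma hol1 (x w : V) : cplxPair x (J x) (J w) = Complex.I * cplxPair x (J x) w := by
  have h1 : ⟪J w, J x⟫ = ⟪w, x⟫ := hJorth w x
  have h2 : ⟪J w, x⟫ = -⟪w, J x⟫ := by
    have h3 := hJorth w (J x)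
    rw [hJ x] at h3
    rw [inner_neg_right] at h3
    linarith
  rw [cplxPair_apply, cplxPair_apply, h1, h2]
  push_cast
  ring_nf
  rw [Complex.I_sq]
  ring

include hJ hJorth in
lemma psiHol (n : ℕ) (e : Fin n → V) (v : Fin n → V) (s : Fin n) :
    Psi n J e (update v s (J (v s))) = Complex.I * Psi n J e v := by
  rw [Psi, cprod_apply_det, cprod_apply_det]
  classical
  set M : Matrix (Fin n) (Fin n) ℂ :=
    Matrix.of fun i j => cOneForm (cplxPair (e i) (J (e i))) (fun _ => v j) with hM
  have key : (Matrix.of fun i j =>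
        cOneForm (cplxPair (e i) (J (e i))) (fun _ => update v s (J (v s)) j))
      = M.updateCol s (Complex.I • fun i => M i s) := by
    ext i j
    by_cases hj : j = s
    · subst hj
      rw [Matrix.updateCol_apply, if_pos rfl]
      simp only [Matrix.of_apply, Pi.smul_apply, smul_eq_mul, hM]
      rw [update_self]
      rw [cOneForm_apply, cOneForm_apply, hol1 J hJ hJorth]
    · rw [Matrix.updateCol_apply, if_neg hj]
      simp only [Matrix.of_apply, hM]
      rw [update_of_ne hj]
  rw [key, Matrix.det_updateCol_smul, Matrix.updateCol_eq_self]

end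

section Basis
variable {n : ℕ} (J : V →ₗ[ℝ] V) (hJ : ∀ v : V, J (J v) = -v)
  (hJorth : ∀ v w : V, ⟪J v, J w⟫ = ⟪v, w⟫)
  (bas : OrthonormalBasis (Fin n ⊕ Fin n) ℝ V)
  (hbas : ∀ j : Fin n, bas (Sum.inr j) = J (bas (Sum.inl j)))

include hbas in
lemma psiOne : Psi n J (fun j => bas (Sum.inl j)) (fun j => bas (Sum.inl j)) = 1 := by
  classical
  rw [Psi, cprod_apply_det]
  have hM : (Matrix.of fun i j => cOneForm (cplxPair (bas (Sum.inl i)) (J (bas (Sum.inl i))))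
        (fun _ => bas (Sum.inl j))) = (1 : Matrix (Fin n) (Fin n) ℂ) := by
    ext i j
    rw [Matrix.of_apply, cOneForm_apply, cplxPair_apply, ← hbas]
    rw [orthonormal_iff_ite.mp bas.orthonormal, orthonormal_iff_ite.mp bas.orthonormal]
    by_cases h : i = j
    · simp [Matrix.one_apply, h]
    · simp [Matrix.one_apply, h, Ne.symm h]
  rw [hM, Matrix.det_one]

include hJ hJorth hbas in
lemma psiUpdate (j : Fin n) (x : V) :
    Psi n J (fun l => bas (Sum.inl l)) (update (fun l => bas (Sum.inl l)) j x)
      = (⟪x, bas (Sum.inl j)⟫ : ℂ) + Complex.I * (⟪x, bas (Sum.inr j)⟫ : ℂ) := by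
  classical
  set el : Fin n → V := fun l => bas (Sum.inl l) with hel
  have hdelta : ∀ l : Fin n, Psi n J el (update el j (bas (Sum.inl l)))
      = if l = j then 1 else 0 := by
    intro l
    by_cases h : l = j
    · subst h
      rw [if_pos rfl, show bas (Sum.inl l) = el l from rfl, update_eq_self]
      exact psiOne J bas hbas
    · rw [if_neg h]
      refine AlternatingMap.map_eq_zero_of_eq _ _ ?_ (show j ≠ l from fun hh => h hh.symm)
      rw [update_self, update_of_ne (show l ≠ j from h)]
  have hdeltaR : ∀ l : Fin n, Psi n J el (update el j (bas (Sum.inr l)))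
      = if l = j then Complex.I else 0 := by
    intro l
    have h1 : update el j (bas (Sum.inr l))
        = update (update el j (bas (Sum.inl l))) j
            (J ((update el j (bas (Sum.inl l))) j)) := by
      rw [update_self, ← hbas, update_idem]
    rw [h1, psiHol J hJ hJorth, hdelta]
    by_cases h : l = j <;> simp [h]
  have hx := bas.sum_repr' x
  conv_lhs => rw [← hx]
  rw [show (Psi n J el) (update el j (∑ i, ⟪bas i, x⟫ • bas i))
      = (Psi n J el).toMultilinearMap (update el j (∑ i, ⟪bas i, x⟫ • bas i)) from rfl]
  rw [MultilinearMap.map_update_sum]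
  simp only [MultilinearMap.map_update_smul]
  rw [Fintype.sum_sum_type]
  simp only [show ∀ w, (Psi n J el).toMultilinearMap (update el j w) = Psi n J el (update el j w)
    from fun _ => rfl]
  simp only [hdelta, hdeltaR, smul_ite, smul_zero]
  rw [Finset.sum_ite_eq' Finset.univ j, Finset.sum_ite_eq' Finset.univ j]
  simp [Complex.real_smul, real_inner_comm]
  ring

end Basis


section Red
variable {m : ℕ} (J : V →ₗ[ℝ] V) (hJ : ∀ v : V, J (J v) = -v)
  (bas : OrthonormalBasis (Fin (m+2) ⊕ Fin (m+2)) ℝ V)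
  (hbas : ∀ j : Fin (m+2), bas (Sum.inr j) = J (bas (Sum.inl j)))

-- canonical tuples
def Etup (bas : OrthonormalBasis (Fin (m+2) ⊕ Fin (m+2)) ℝ V) (j : Fin (m+2)) :
    Fin (m+1) → V := fun i => bas (Sum.inl (j.succAbove i))

def Ftup (bas : OrthonormalBasis (Fin (m+2) ⊕ Fin (m+2)) ℝ V) (j : Fin (m+2)) :
    Fin (m+1) → V := update (Etup bas j) 0 (bas (Sum.inr (j.succAbove 0)))

lemma isLam_pair {p : ℕ} {d : V [⋀^Fin p]→ₗ[ℝ] ℝ} (hd : IsLam J d)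
    (v : Fin p → V) (i j : Fin p) (hij : i ≠ j) :
    d (update (update v i (J (v i))) j (J (v j))) = - d v := by
  rcases lt_or_gt_of_ne hij with h | h
  · exact hd v i j h
  · rw [update_comm hij]
    exact hd v j i h

include hJ hbas in
lemma sw {d : V [⋀^Fin (m+1)]→ₗ[ℝ] ℝ} (hd : IsLam J d)
    (v : Fin (m+1) → V) (i j : Fin (m+1)) (hij : i ≠ j) (a l : Fin (m+2))
    (hvi : v i = bas (Sum.inr a)) (hvj : v j = bas (Sum.inl l)) :
    d v = d (update (update v i (bas (Sum.inl a))) j (bas (Sum.inr l))) := by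
  set w : Fin (m+1) → V :=
    update (update v i (bas (Sum.inl a))) j ((-1 : ℝ) • bas (Sum.inr l)) with hw
  have hwi : w i = bas (Sum.inl a) := by
    rw [hw, update_of_ne hij, update_self]
  have hwj : w j = (-1 : ℝ) • bas (Sum.inr l) := by rw [hw, update_self]
  have h1 := isLam_pair J hd w i j hij
  have hJwi : J (w i) = bas (Sum.inr a) := by rw [hwi, ← hbas]
  have hJwj : J (w j) = bas (Sum.inl l) := by
    rw [hwj, map_smul, hbas, hJ]
    simp
  rw [hJwi, hJwj] at h1
  have hT : update (update w i (bas (Sum.inr a))) j (bas (Sum.inl l)) = v := by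
    rw [hw]
    funext k
    by_cases hk : k = i
    · subst hk
      rw [update_of_ne hij, update_self, hvi]
    · by_cases hk2 : k = j
      · subst hk2
        rw [update_self, hvj]
      · rw [update_of_ne hk2, update_of_ne hk, update_of_ne hk2, update_of_ne hk]
  rw [hT] at h1
  have h2 : d w = - d (update (update v i (bas (Sum.inl a))) j (bas (Sum.inr l))) := by
    rw [hw]
    have := d.toMultilinearMap.map_update_smul
      (update v i (bas (Sum.inl a))) j (-1 : ℝ) (bas (Sum.inr l))
    rw [show (d : MultilinearMap ℝ (fun _ : Fin (m+1) => V) ℝ)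
        (update (update v i (bas (Sum.inl a))) j ((-1:ℝ) • bas (Sum.inr l)))
      = d (update (update v i (bas (Sum.inl a))) j ((-1:ℝ) • bas (Sum.inr l))) from rfl] at this
    rw [this]
    simp
  rw [h2] at h1
  linarith

include hJ hbas in
lemma red {d : V [⋀^Fin (m+1)]→ₗ[ℝ] ℝ} (hd : IsLam J d)
    (hE : ∀ j : Fin (m+2), d (Etup bas j) = 0)
    (hF : ∀ j : Fin (m+2), d (Ftup bas j) = 0) :
    d = 0 := by
  classical
  -- missing-index permutation construction
  have mkperm : ∀ (g₀ : Fin (m+1) → Fin (m+2)), Function.Injective g₀ →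
      ∃ (j : Fin (m+2)) (σ : Equiv.Perm (Fin (m+1))), ∀ i, j.succAbove (σ i) = g₀ i := by
    intro g₀ hg₀
    have hmiss : ∃ j : Fin (m+2), ∀ i, g₀ i ≠ j := by
      by_contra hcon2
      push_neg at hcon2
      have hsurj : Function.Surjective g₀ := fun j => hcon2 j
      have := Fintype.card_le_of_surjective g₀ hsurj
      simp at this
    obtain ⟨j, hj⟩ := hmiss
    choose σf hσf using fun i => Fin.exists_succAbove_eq (hj i)
    have hσinj : Function.Injective σf := by
      intro s t hst
      apply hg₀
      rw [← hσf, ← hσf, hst]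
    exact ⟨j, Equiv.ofBijective σf (Finite.injective_iff_bijective.mp hσinj), fun i => hσf i⟩
  have main : ∀ (N : ℕ) (g : Fin (m+1) → Fin (m+2) ⊕ Fin (m+2)),
      (Finset.univ.filter fun i => (g i).isRight).card = N → d (fun i => bas (g i)) = 0 := by
    intro N
    induction N using Nat.strong_induction_on with
    | _ N IH =>
      intro g hg
      by_cases hinj : Function.Injective g
      case neg =>
        obtain ⟨s, t, hgs, hst⟩ := Function.not_injective_iff.mp hinj
        exact AlternatingMap.map_eq_zero_of_eq _ _ (by rw [hgs]) hst
      case pos =>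
      rcases Nat.lt_or_ge N 2 with hN2 | hN2
      · -- N = 0 or 1
        interval_cases N
        · -- all entries are inl
          have hleft : ∀ k, ∃ c, g k = Sum.inl c := by
            intro k
            have : ¬ (g k).isRight := by
              intro hR
              have : k ∈ Finset.univ.filter fun i => (g i).isRight := by
                simp [hR]
              rw [Finset.card_eq_zero.mp hg] at this
              simp at this
            rcases hgk : g k with c | c
            · exact ⟨c, rfl⟩
            · rw [hgk] at this
              simp at this
          choose g₀ hg₀ using hleft
          have hg₀inj : Function.Injective g₀ := by
            intro s t hst
            apply hinj
            rw [hg₀, hg₀, hst]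
          obtain ⟨j, σ, hσ⟩ := mkperm g₀ hg₀inj
          have htup : (fun i => bas (g i)) = (Etup bas j) ∘ ⇑σ := by
            funext i
            simp only [comp_apply, Etup]
            rw [hσ, ← hg₀]
          rw [htup, AlternatingMap.map_perm, hE j, smul_zero]
        · -- exactly one inr
          obtain ⟨i₀, hS⟩ := Finset.card_eq_one.mp hg
          have hi₀mem : i₀ ∈ Finset.univ.filter fun i => (g i).isRight := by
            rw [hS]; exact Finset.mem_singleton_self i₀
          have hi₀ : (g i₀).isRight := (Finset.mem_filter.mp hi₀mem).2
          obtain ⟨a, ha⟩ := Sum.isRight_iff.mp hi₀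
          have hleft : ∀ k, k ≠ i₀ → ∃ c, g k = Sum.inl c := by
            intro k hk
            have : ¬ (g k).isRight := by
              intro hR
              have hmem : k ∈ Finset.univ.filter fun i => (g i).isRight := by simp [hR]
              rw [hS, Finset.mem_singleton] at hmem
              exact hk hmem
            rcases hgk : g k with c | c
            · exact ⟨c, rfl⟩
            · rw [hgk] at this; simp at this
          set g₀ : Fin (m+1) → Fin (m+2) := fun k => Sum.elim id id (g k) with hg₀def
          have hg₀i₀ : g₀ i₀ = a := by rw [hg₀def]; simp [ha]
          have hg₀l : ∀ k, k ≠ i₀ → g k = Sum.inl (g₀ k) := by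
            intro k hk
            obtain ⟨c, hc⟩ := hleft k hk
            rw [hg₀def]; simp [hc]
          set v : Fin (m+1) → V := fun i => bas (g i) with hv
          have hvi₀ : v i₀ = bas (Sum.inr a) := by rw [hv]; simp [ha]
          by_cases hcol : ∃ s, s ≠ i₀ ∧ g₀ s = a
          · obtain ⟨s, hs, hsa⟩ := hcol
            have hvs : v s = bas (Sum.inl a) := by
              rw [hv]
              simp only []
              rw [hg₀l s hs, hsa]
            have h1 := sw J hJ bas hbas hd v i₀ s (Ne.symm hs) a a hvi₀ hvs
            have hT : update (update v i₀ (bas (Sum.inl a))) s (bas (Sum.inr a))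
                = v ∘ ⇑(Equiv.swap i₀ s) := by
              funext k
              by_cases hk : k = i₀
              · subst hk
                rw [update_of_ne (Ne.symm hs), update_self, comp_apply,
                  Equiv.swap_apply_left, hvs]
              · by_cases hk2 : k = s
                · subst hk2
                  rw [update_self, comp_apply, Equiv.swap_apply_right, hvi₀]
                · rw [update_of_ne hk2, update_of_ne hk, comp_apply,
                    Equiv.swap_apply_of_ne_of_ne hk hk2]
            rw [hT, AlternatingMap.map_perm, Equiv.Perm.sign_swap (Ne.symm hs)] at h1
            have h2 : d v = - d v := by
              nth_rewrite 1 [h1]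
              simp [Units.smul_def]
            linarith
          · push_neg at hcol
            have hg₀inj : Function.Injective g₀ := by
              intro s t hst
              by_cases hsi : s = i₀
              · by_cases hti : t = i₀
                · rw [hsi, hti]
                · exfalso
                  exact hcol t hti (by rw [hst.symm, hsi, hg₀i₀])
              · by_cases hti : t = i₀
                · exfalso
                  exact hcol s hsi (by rw [hst, hti, hg₀i₀])
                · apply hinj
                  rw [hg₀l s hsi, hg₀l t hti, hst]
            obtain ⟨j, σ, hσ⟩ := mkperm g₀ hg₀inj
            set t := σ i₀ with ht
            set T : Fin (m+1) → V :=
              update (Etup bas j) t (bas (Sum.inr (j.succAbove t))) with hTdef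
            have htup : v = T ∘ ⇑σ := by
              funext k
              by_cases hk : k = i₀
              · subst hk
                simp only [comp_apply, hTdef, ← ht]
                rw [update_self, hσ, hg₀i₀, hvi₀]
              · have hσk : σ k ≠ t := by
                  rw [ht]
                  exact fun hh => hk (σ.injective hh)
                simp only [comp_apply, hTdef]
                rw [update_of_ne hσk]
                simp only [Etup]
                rw [hσ, ← hg₀l k hk]
            have hdT : d T = 0 := by
              by_cases ht0 : t = 0
              · rw [hTdef, ht0]
                exact hF j
              · have hT_t : T t = bas (Sum.inr (j.succAbove t)) := by
                  rw [hTdef, update_self]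
                have hT_0 : T 0 = bas (Sum.inl (j.succAbove 0)) := by
                  rw [hTdef, update_of_ne (Ne.symm ht0)]
                  rfl
                have h2 := sw J hJ bas hbas hd T t 0 ht0 (j.succAbove t) (j.succAbove 0) hT_t hT_0
                have hT2 : update (update T t (bas (Sum.inl (j.succAbove t)))) 0
                    (bas (Sum.inr (j.succAbove 0))) = Ftup bas j := by
                  rw [hTdef, update_idem, Ftup]
                  congr 1
                  rw [show bas (Sum.inl (j.succAbove t)) = Etup bas j t from rfl, update_eq_self]
                rw [h2, hT2]
                exact hF j
            rw [htup, AlternatingMap.map_perm, hdT, smul_zero]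
      · -- N ≥ 2 : reduce two inr's
        have h1lt : 1 < (Finset.univ.filter fun i => (g i).isRight).card := by omega
        obtain ⟨i, hi, j, hj, hij⟩ := Finset.one_lt_card.mp h1lt
        have hgi : (g i).isRight := (Finset.mem_filter.mp hi).2
        have hgj : (g j).isRight := (Finset.mem_filter.mp hj).2
        obtain ⟨a, ha⟩ := Sum.isRight_iff.mp hgi
        obtain ⟨b', hb'⟩ := Sum.isRight_iff.mp hgj
        set g' := update (update g i (Sum.inl a)) j (Sum.inl b') with hg'
        have hg'i : g' i = Sum.inl a := by rw [hg', update_of_ne hij, update_self]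
        have hg'j : g' j = Sum.inl b' := by rw [hg', update_self]
        have hg'k : ∀ k, k ≠ i → k ≠ j → g' k = g k := by
          intro k hk hk2
          rw [hg', update_of_ne hk2, update_of_ne hk]
        have htup : (fun k => bas (g k))
            = update (update (fun k => bas (g' k)) i (J (bas (g' i)))) j (J (bas (g' j))) := by
          funext k
          by_cases hk : k = i
          · subst hk
            rw [update_of_ne hij, update_self, hg'i, ← hbas, ha]
          · by_cases hk2 : k = j
            · subst hk2
              rw [update_self, hg'j, ← hbas, hb']
            · rw [update_of_ne hk2, update_of_ne hk, hg'k k hk hk2]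
        have hpair := isLam_pair J hd (fun k => bas (g' k)) i j hij
        rw [show J ((fun k => bas (g' k)) i) = J (bas (g' i)) from rfl,
          show J ((fun k => bas (g' k)) j) = J (bas (g' j)) from rfl] at hpair
        rw [htup, hpair]
        have hsub : (Finset.univ.filter fun k => (g' k).isRight)
            ⊆ (Finset.univ.filter fun k => (g k).isRight).erase i := by
          intro k hk
          have hkR : (g' k).isRight := (Finset.mem_filter.mp hk).2
          have hki : k ≠ i := by
            intro hh; rw [hh, hg'i] at hkR; simp at hkR
          have hkj : k ≠ j := by
            intro hh; rw [hh, hg'j] at hkR; simp at hkR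
          refine Finset.mem_erase.mpr ⟨hki, ?_⟩
          rw [Finset.mem_filter]
          exact ⟨Finset.mem_univ k, by rw [← hg'k k hki hkj]; exact hkR⟩
        have hcard : (Finset.univ.filter fun k => (g' k).isRight).card < N := by
          have h1 := Finset.card_le_card hsub
          rw [Finset.card_erase_of_mem hi, hg] at h1
          omega
        rw [IH _ hcard g' rfl]
        simp
  -- conclude
  refine AlternatingMap.coe_multilinearMap_injective ?_
  refine Module.Basis.ext_multilinear (fun _ => bas.toBasis) (fun g => ?_)
  have := main _ g rfl
  simp only [OrthonormalBasis.coe_toBasis]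
  rw [show ((d : MultilinearMap ℝ (fun _ : Fin (m+1) => V) ℝ) fun i => bas (g i))
    = d (fun i => bas (g i)) from rfl, this]
  rfl
end Red



lemma curryLeft_apply' {k : ℕ} (f : V [⋀^Fin (k+1)]→ₗ[ℝ] ℝ) (x : V) (v : Fin k → V) :
    f.curryLeft x v = f (Fin.cons x v) := rfl

lemma psiP_apply {n : ℕ} (J : V →ₗ[ℝ] V) (e : Fin n → V) (v : Fin n → V) :
    psiP n J e v = (Psi n J e v).re := rfl

lemma psiM_apply {n : ℕ} (J : V →ₗ[ℝ] V) (e : Fin n → V) (v : Fin n → V) :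
    psiM n J e v = (Psi n J e v).im := rfl

section Main
variable {m : ℕ} (J : V →ₗ[ℝ] V) (hJ : ∀ v : V, J (J v) = -v)
  (hJorth : ∀ v w : V, ⟪J v, J w⟫ = ⟪v, w⟫)
  (bas : OrthonormalBasis (Fin (m+2) ⊕ Fin (m+2)) ℝ V)
  (hbas : ∀ j : Fin (m+2), bas (Sum.inr j) = J (bas (Sum.inl j)))

include hJ hJorth in
lemma psiConsHol (e : Fin (m+2) → V) (x : V) (v : Fin (m+1) → V) :
    Psi (m+2) J e (Fin.cons (J x) v) = Complex.I * Psi (m+2) J e (Fin.cons x v) := by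
  have h1 : (Fin.cons (J x) v : Fin (m+2) → V)
      = update (Fin.cons x v : Fin (m+2) → V) 0 (J ((Fin.cons x v : Fin (m+2) → V) 0)) := by
    simp only [Fin.cons_zero]
    rw [Fin.update_cons_zero]
  rw [h1, psiHol J hJ hJorth]

include hJ hJorth in
lemma fwd_isLam (e : Fin (m+2) → V) (x : V) :
    IsLam J ((psiP (m+2) J e).curryLeft x) := by
  intro v i j hij
  rw [curryLeft_apply', curryLeft_apply', Fin.cons_update, Fin.cons_update]
  have hne : i.succ ≠ j.succ := fun h => hij.ne (Fin.succ_injective _ h)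
  have e1 : J (v i) = J ((Fin.cons x v : Fin (m+2) → V) i.succ) := by
    simp only [Fin.cons_succ]
  have e2 : J (v j) = J ((update (Fin.cons x v : Fin (m+2) → V) i.succ (J (v i))) j.succ) := by
    rw [update_of_ne (Ne.symm hne)]
    simp only [Fin.cons_succ]
  rw [e2, e1, psiP_apply, psiP_apply, psiHol J hJ hJorth, psiHol J hJ hJorth,
    ← mul_assoc, Complex.I_mul_I, neg_one_mul, Complex.neg_re]

include hJ hJorth in
lemma psiM_eq_psiP (e : Fin (m+2) → V) (x : V) :
    (psiM (m+2) J e).curryLeft x = (psiP (m+2) J e).curryLeft (-(J x)) := by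
  rw [map_neg]
  ext v
  rw [AlternatingMap.neg_apply, curryLeft_apply', curryLeft_apply', psiM_apply, psiP_apply,
    psiConsHol J hJ hJorth]
  simp [Complex.mul_re]

include hJ hJorth hbas in
lemma consE (j : Fin (m+2)) (x : V) :
    Psi (m+2) J (fun l => bas (Sum.inl l)) (Fin.cons x (Etup bas j))
      = (-1 : ℂ) ^ (j : ℕ) *
        ((⟪x, bas (Sum.inl j)⟫ : ℂ) + Complex.I * (⟪x, bas (Sum.inr j)⟫ : ℂ)) := by
  classical
  set el : Fin (m+2) → V := fun l => bas (Sum.inl l) with hel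
  have hperm : Fin.cons x (Etup bas j) = (update el j x) ∘ ⇑(j.cycleRange)⁻¹ := by
    funext k
    induction k using Fin.cases with
    | zero =>
        rw [Fin.cons_zero, comp_apply]
        rw [show ⇑(j.cycleRange)⁻¹ = ⇑(j.cycleRange).symm from rfl, Fin.cycleRange_symm_zero,
          update_self]
    | succ i =>
        rw [Fin.cons_succ, comp_apply]
        rw [show ⇑(j.cycleRange)⁻¹ = ⇑(j.cycleRange).symm from rfl, Fin.cycleRange_symm_succ,
          update_of_ne (Fin.succAbove_ne j i)]
        rfl
  rw [hperm, AlternatingMap.map_perm, psiUpdate J hJ hJorth bas hbas, map_inv,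
    Fin.sign_cycleRange]
  rw [Units.smul_def, zsmul_eq_mul, ← inv_pow, show ((-1 : ℤˣ))⁻¹ = -1 from by decide]
  push_cast
  ring

include hJ hJorth hbas in
lemma consF (j : Fin (m+2)) (x : V) :
    Psi (m+2) J (fun l => bas (Sum.inl l)) (Fin.cons x (Ftup bas j))
      = Complex.I * Psi (m+2) J (fun l => bas (Sum.inl l)) (Fin.cons x (Etup bas j)) := by
  have h1 : Fin.cons x (Ftup bas j)
      = update (Fin.cons x (Etup bas j) : Fin (m+2) → V) (0 : Fin (m+1)).succ
          (J ((Fin.cons x (Etup bas j) : Fin (m+2) → V) (0 : Fin (m+1)).succ)) := by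
    simp only [Fin.cons_succ]
    rw [show (Etup bas j) 0 = bas (Sum.inl (j.succAbove 0)) from rfl, ← hbas, Ftup]
    simp only [Fin.cons_update]
  rw [h1, psiHol J hJ hJorth]

end Main

section Main2
variable {m : ℕ} (J : V →ₗ[ℝ] V) (hJ : ∀ v : V, J (J v) = -v)
  (hJorth : ∀ v w : V, ⟪J v, J w⟫ = ⟪v, w⟫)
  (bas : OrthonormalBasis (Fin (m+2) ⊕ Fin (m+2)) ℝ V)
  (hbas : ∀ j : Fin (m+2), bas (Sum.inr j) = J (bas (Sum.inl j)))

lemma re_neg_pow_mul (k : ℕ) (z : ℂ) : ((-1:ℂ)^k * z).re = (-1:ℝ)^k * z.re := by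
  rw [show ((-1:ℂ))^k = Complex.ofReal ((-1:ℝ)^k) from by push_cast; ring,
    ← Complex.real_smul, Complex.smul_re, smul_eq_mul]

include hJ hJorth hbas in
lemma bwd (b : V [⋀^Fin (m+1)]→ₗ[ℝ] ℝ) (hb : IsLam J b) :
    ∃ x : V, b = (psiP (m+2) J (fun l => bas (Sum.inl l))).curryLeft x := by
  classical
  set el : Fin (m+2) → V := fun l => bas (Sum.inl l) with hel
  set coef : Fin (m+2) ⊕ Fin (m+2) → ℝ :=
    Sum.elim (fun j => (-1:ℝ)^(j:ℕ) * b (Etup bas j))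
      (fun j => -((-1:ℝ)^(j:ℕ) * b (Ftup bas j))) with hcoef
  set x : V := ∑ i, coef i • bas i with hx
  have hinner : ∀ i₀, ⟪x, bas i₀⟫ = coef i₀ := by
    intro i₀
    rw [hx, sum_inner]
    have hterm : ∀ i : Fin (m+2) ⊕ Fin (m+2),
        ⟪coef i • bas i, bas i₀⟫ = if i = i₀ then coef i else 0 := by
      intro i
      rw [real_inner_smul_left, orthonormal_iff_ite.mp bas.orthonormal i i₀]
      by_cases h : i = i₀ <;> simp [h]
    rw [Finset.sum_congr rfl (fun i _ => hterm i), Finset.sum_ite_eq' Finset.univ i₀]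
    simp
  have hsq' : ∀ j : Fin (m+2), (-1:ℝ)^(j:ℕ) * (-1)^(j:ℕ) = 1 := by
    intro j
    rw [← pow_add, ← two_mul, pow_mul, neg_one_sq, one_pow]
  have hcurE : ∀ j, (psiP (m+2) J el).curryLeft x (Etup bas j) = b (Etup bas j) := by
    intro j
    rw [curryLeft_apply', psiP_apply, consE J hJ hJorth bas hbas, hinner, hinner]
    rw [hcoef]
    simp only [Sum.elim_inl, Sum.elim_inr]
    rw [re_neg_pow_mul]
    simp only [Complex.add_re, Complex.ofReal_re, Complex.mul_re, Complex.I_re, Complex.I_im,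
      Complex.ofReal_im]
    ring_nf
    linear_combination b (Etup bas j) * hsq' j
  have hcurF : ∀ j, (psiP (m+2) J el).curryLeft x (Ftup bas j) = b (Ftup bas j) := by
    intro j
    rw [curryLeft_apply', psiP_apply, consF J hJ hJorth bas hbas,
      consE J hJ hJorth bas hbas, hinner, hinner]
    rw [hcoef]
    simp only [Sum.elim_inl, Sum.elim_inr]
    rw [mul_left_comm, re_neg_pow_mul]
    simp only [Complex.mul_re, Complex.I_re, Complex.I_im, Complex.add_re, Complex.add_im,
      Complex.mul_im, Complex.ofReal_re, Complex.ofReal_im]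
    ring_nf
    linear_combination b (Ftup bas j) * hsq' j
  have hdLam : IsLam J ((psiP (m+2) J el).curryLeft x - b) := by
    intro v i j hij
    rw [AlternatingMap.sub_apply, AlternatingMap.sub_apply,
      fwd_isLam J hJ hJorth el x v i j hij, hb v i j hij]
    ring
  have hd0 := red J hJ bas hbas hdLam
    (fun j => by rw [AlternatingMap.sub_apply, hcurE, sub_self])
    (fun j => by rw [AlternatingMap.sub_apply, hcurF, sub_self])
  exact ⟨x, (sub_eq_zero.mp hd0).symm⟩

end Main2

end Aux

/-- for n ≥ 2, {x ⌟ ψ₊ : x ∈ V} = ⟦λ^{n−1,0}⟧ = {x ⌟ ψ₋ : x ∈ V}. -/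
theorem contractions_of_psi
{V : Type*} [NormedAddCommGroup V] [InnerProductSpace ℝ V]
    [FiniteDimensional ℝ V] (n : ℕ) (hdim : Module.finrank ℝ V = 2 * n)
    (J : V →ₗ[ℝ] V) (hJ : ∀ v : V, J (J v) = -v)
    (hJorth : ∀ v w : V, ⟪J v, J w⟫ = ⟪v, w⟫)
    (bas : OrthonormalBasis (Fin n ⊕ Fin n) ℝ V)
    (hbas : ∀ j : Fin n, bas (Sum.inr j) = J (bas (Sum.inl j)))
    (ω : V [⋀^Fin 2]→ₗ[ℝ] ℝ) (hω : ∀ x y : V, ω ![x, y] = ⟪x, J y⟫)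
    (ψp ψm : V [⋀^Fin n]→ₗ[ℝ] ℝ)
    (hψp : ψp = psiP n J (fun j => bas (Sum.inl j)))
    (hψm : ψm = psiM n J (fun j => bas (Sum.inl j)))
    (hn : 2 ≤ n) :
    ({c : V [⋀^Fin (n - 1)]→ₗ[ℝ] ℝ | ∃ x : V, c = ic x ψp} = {c | IsLam J c})
      ∧ ({c : V [⋀^Fin (n - 1)]→ₗ[ℝ] ℝ | ∃ x : V, c = ic x ψm} = {c | IsLam J c}) := by
  obtain ⟨m, rfl⟩ : ∃ m, n = m + 2 := ⟨n - 2, by omega⟩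
  subst hψp
  subst hψm
  classical
  have hic : ∀ (x : V) (ψ : V [⋀^Fin (m+2)]→ₗ[ℝ] ℝ), ic x ψ = ψ.curryLeft x := fun _ _ => rfl
  constructor
  · ext c
    simp only [Set.mem_setOf_eq]
    constructor
    · rintro ⟨x, rfl⟩
      rw [hic]
      exact fwd_isLam J hJ hJorth _ x
    · intro hc
      obtain ⟨x, hx⟩ := bwd J hJ hJorth bas hbas c hc
      exact ⟨x, by rw [hic]; exact hx⟩
  · ext c
    simp only [Set.mem_setOf_eq]
    constructor
    · rintro ⟨x, rfl⟩
      rw [hic, psiM_eq_psiP J hJ hJorth]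
      exact fwd_isLam J hJ hJorth _ _
    · intro hc
      obtain ⟨x, hx⟩ := bwd J hJ hJorth bas hbas c hc
      refine ⟨J x, ?_⟩
      rw [hic, psiM_eq_psiP J hJ hJorth, hJ x, neg_neg]
      exact hx

end SUnPaper
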